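/- Let Y be a Hausdorff compact space regarded as the subset of the quotient Δ'(Y) of Δ(Y) = Δ_ω × Y^ω by the relation (d,a) ~ (d',a') iff for all y ∈ Y, Σ_{aᵢ=y} dᵢ = Σ_{a'ᵢ=y} d'ᵢ, via the embedding sending y to the class of any (d, a) with aᵢ = y whenever dᵢ ≠ 0. Then this embedding is well-defined and injective, and its image p(Q) equals a homeomorphic copy of Y inside the Hausdorff space Δ'(Y). -/

import Mathlib

/-- The infinite-dimensional simplex of finitely supported probability
vectors indexed by `I`. -/
def DeltaOmega (I : Type*) : Type _ :=
  {d : I → ℝ // (∀ i, 0 ≤ d i) ∧ (Function.support d).Finite ∧ ∑' i, d i = 1}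

instance (I : Type*) : TopologicalSpace (DeltaOmega I) :=
  inferInstanceAs (TopologicalSpace
    {d : I → ℝ // (∀ i, 0 ≤ d i) ∧ (Function.support d).Finite ∧ ∑' i, d i = 1})

/-- The total mass assigned to the point `y` by the formal convex combination
`(d, a)`. -/
noncomputable def massAt {I Y : Type*} (p : DeltaOmega I × (I → Y)) (y : Y) : ℝ :=
  ∑' i, Set.indicator {i | p.2 i = y} p.1.1 i

/-- The equivalence relation identifying formal convex combinations with the
same mass at every point. -/
def deltaSetoid (I Y : Type*) : Setoid (DeltaOmega I × (I → Y)) :=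
  ⟨fun p q => massAt p = massAt q,
    ⟨fun _ => rfl, Eq.symm, Eq.trans⟩⟩

section Aux

open Set Function Topology

variable {I Y : Type*}

/-- The finite support of `d` as a finset. -/
noncomputable def suppF (d : DeltaOmega I) : Finset I := d.2.2.1.toFinset

lemma mem_suppF {d : DeltaOmega I} {i : I} : i ∈ suppF d ↔ d.1 i ≠ 0 := by
  simp [suppF, Function.mem_support]

lemma not_mem_suppF {d : DeltaOmega I} {i : I} (h : i ∉ suppF d) : d.1 i = 0 := by
  by_contra hh; exact h (mem_suppF.mpr hh)

lemma sum_eq_one {d : DeltaOmega I} {s : Finset I} (hs : suppF d ⊆ s) :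
    ∑ i ∈ s, d.1 i = 1 := by
  have h : ∑' i, d.1 i = ∑ i ∈ s, d.1 i := tsum_eq_sum (f := d.1) (s := s)
    (fun i hi => not_mem_suppF fun hm => hi (hs hm))
  rw [← h]
  exact d.2.2.2

lemma massAt_eq_sum (p : DeltaOmega I × (I → Y)) {s : Finset I} (hs : suppF p.1 ⊆ s)
    (y : Y) : massAt p y = ∑ i ∈ s, Set.indicator {i | p.2 i = y} p.1.1 i := by
  refine tsum_eq_sum fun i hi => ?_
  have h0 : p.1.1 i = 0 := not_mem_suppF fun hm => hi (hs hm)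
  simp [Set.indicator_apply, h0]

variable [TopologicalSpace Y]

/-- Integration of a continuous function against the formal combination. -/
noncomputable def Phi (p : DeltaOmega I × (I → Y)) (f : C(Y, ℝ)) : ℝ :=
  ∑' i, p.1.1 i * f (p.2 i)

lemma Phi_eq_sum (p : DeltaOmega I × (I → Y)) (f : C(Y, ℝ)) {s : Finset I}
    (hs : suppF p.1 ⊆ s) : Phi p f = ∑ i ∈ s, p.1.1 i * f (p.2 i) := by
  refine tsum_eq_sum fun i hi => ?_
  have h0 : p.1.1 i = 0 := not_mem_suppF fun hm => hi (hs hm)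
  simp [h0]

lemma Phi_eq_mass (p : DeltaOmega I × (I → Y)) (f : C(Y, ℝ)) {T : Finset Y}
    (hT : ∀ i ∈ suppF p.1, p.2 i ∈ T) :
    Phi p f = ∑ y ∈ T, massAt p y * f y := by
  classical
  rw [Phi_eq_sum p f (Finset.Subset.refl _)]
  have h1 : ∀ y ∈ T, massAt p y * f y
      = ∑ i ∈ suppF p.1, (if p.2 i = y then p.1.1 i else 0) * f y := by
    intro y _
    rw [massAt_eq_sum p (Finset.Subset.refl _) y, Finset.sum_mul]
    exact Finset.sum_congr rfl fun i _ => by simp [Set.indicator_apply]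
  rw [Finset.sum_congr rfl h1, Finset.sum_comm]
  refine Finset.sum_congr rfl fun i hi => ?_
  have h2 : (∑ y ∈ T, (if p.2 i = y then p.1.1 i else 0) * f y)
      = ∑ y ∈ T, if p.2 i = y then p.1.1 i * f y else 0 :=
    Finset.sum_congr rfl fun y _ => by split <;> simp
  rw [h2, Finset.sum_ite_eq T (p.2 i) (fun y => p.1.1 i * f y), if_pos (hT i hi)]

lemma Phi_well {p q : DeltaOmega I × (I → Y)} (h : massAt p = massAt q) :
    Phi p = Phi q := by
  classical
  funext f
  rw [Phi_eq_mass p f (T := (suppF p.1).image p.2 ∪ (suppF q.1).image q.2)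
        (fun i hi => Finset.mem_union_left _ (Finset.mem_image_of_mem _ hi)),
      Phi_eq_mass q f (T := (suppF p.1).image p.2 ∪ (suppF q.1).image q.2)
        (fun i hi => Finset.mem_union_right _ (Finset.mem_image_of_mem _ hi)), h]

lemma Phi_sep [CompactSpace Y] [T2Space Y] {p q : DeltaOmega I × (I → Y)}
    (h : massAt p ≠ massAt q) : Phi p ≠ Phi q := by
  classical
  obtain ⟨y, hy⟩ := Function.ne_iff.mp h
  set T : Finset Y := insert y ((suppF p.1).image p.2 ∪ (suppF q.1).image q.2) with hTdef
  obtain ⟨f, hf0, hf1, -⟩ := exists_continuous_zero_one_of_isClosed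
    (s := (↑(T.erase y) : Set Y)) (t := {y})
    ((T.erase y).finite_toSet.isClosed) isClosed_singleton
    (Set.disjoint_singleton_right.mpr (by simp))
  have key : ∀ r : DeltaOmega I × (I → Y), (∀ i ∈ suppF r.1, r.2 i ∈ T) →
      Phi r f = massAt r y := by
    intro r hr
    rw [Phi_eq_mass r f hr]
    rw [Finset.sum_eq_single y]
    · have : f y = 1 := by simpa using hf1 (Set.mem_singleton y)
      rw [this, mul_one]
    · intro z hz hne
      have : f z = 0 := by
        simpa using hf0 (Finset.mem_coe.mpr (Finset.mem_erase.mpr ⟨hne, hz⟩))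
      rw [this, mul_zero]
    · intro hy'
      exact absurd (Finset.mem_insert_self y _) hy'
  have hp : Phi p f = massAt p y :=
    key p fun i hi => Finset.mem_insert_of_mem
      (Finset.mem_union_left _ (Finset.mem_image_of_mem _ hi))
  have hq : Phi q f = massAt q y :=
    key q fun i hi => Finset.mem_insert_of_mem
      (Finset.mem_union_right _ (Finset.mem_image_of_mem _ hi))
  intro heq
  exact hy (by rw [← hp, heq, hq])

lemma Phi_cont [CompactSpace Y] :
    Continuous (fun p : DeltaOmega I × (I → Y) => Phi p) := by
  refine continuous_pi fun f => ?_
  rw [continuous_iff_continuousAt]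
  intro p₀
  classical
  set S : Finset I := suppF p₀.1 with hS
  have hval : Continuous (fun p : DeltaOmega I × (I → Y) => (p.1.1 : I → ℝ)) := by
    exact continuous_subtype_val.comp continuous_fst
  have hc : Continuous (fun p : DeltaOmega I × (I → Y) =>
      ∑ i ∈ S, p.1.1 i * f (p.2 i)) := by
    refine continuous_finset_sum _ fun i _ => ?_
    exact ((continuous_apply i).comp hval).mul
      (f.continuous.comp ((continuous_apply i).comp continuous_snd))
  have hsum : Continuous (fun p : DeltaOmega I × (I → Y) => ∑ i ∈ S, p.1.1 i) :=
    continuous_finset_sum _ fun i _ => (continuous_apply i).comp hval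
  have he : Continuous (fun p : DeltaOmega I × (I → Y) =>
      ‖f‖ * (1 - ∑ i ∈ S, p.1.1 i)) :=
    continuous_const.mul (continuous_const.sub hsum)
  have hbound : ∀ p : DeltaOmega I × (I → Y),
      |Phi p f - ∑ i ∈ S, p.1.1 i * f (p.2 i)| ≤ ‖f‖ * (1 - ∑ i ∈ S, p.1.1 i) := by
    intro p
    have h1 : Phi p f = ∑ i ∈ S ∪ suppF p.1, p.1.1 i * f (p.2 i) :=
      Phi_eq_sum p f Finset.subset_union_right
    have hdisj : Disjoint S (suppF p.1 \ S) := Finset.disjoint_sdiff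
    have hun : S ∪ (suppF p.1 \ S) = S ∪ suppF p.1 := Finset.union_sdiff_self_eq_union
    have h2 : Phi p f - ∑ i ∈ S, p.1.1 i * f (p.2 i)
        = ∑ i ∈ suppF p.1 \ S, p.1.1 i * f (p.2 i) := by
      rw [h1, ← hun, Finset.sum_union hdisj]; ring
    have h3 : ∑ i ∈ suppF p.1 \ S, p.1.1 i = 1 - ∑ i ∈ S, p.1.1 i := by
      have h4 : ∑ i ∈ S ∪ suppF p.1, p.1.1 i = 1 :=
        sum_eq_one Finset.subset_union_right
      rw [← hun, Finset.sum_union hdisj] at h4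
      linarith
    rw [h2]
    calc |∑ i ∈ suppF p.1 \ S, p.1.1 i * f (p.2 i)|
        ≤ ∑ i ∈ suppF p.1 \ S, |p.1.1 i * f (p.2 i)| :=
          Finset.abs_sum_le_sum_abs _ _
      _ ≤ ∑ i ∈ suppF p.1 \ S, p.1.1 i * ‖f‖ := by
          refine Finset.sum_le_sum fun i _ => ?_
          rw [abs_mul, abs_of_nonneg (p.1.2.1 i)]
          refine mul_le_mul_of_nonneg_left ?_ (p.1.2.1 i)
          simpa [Real.norm_eq_abs] using f.norm_coe_le_norm (p.2 i)
      _ = (∑ i ∈ suppF p.1 \ S, p.1.1 i) * ‖f‖ := by rw [Finset.sum_mul]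
      _ = ‖f‖ * (1 - ∑ i ∈ S, p.1.1 i) := by rw [h3, mul_comm]
  have hsum0 : ∑ i ∈ S, p₀.1.1 i = 1 := sum_eq_one (Finset.Subset.refl _)
  have he0 : ‖f‖ * (1 - ∑ i ∈ S, p₀.1.1 i) = 0 := by rw [hsum0]; ring
  have heq0 : Phi p₀ f = ∑ i ∈ S, p₀.1.1 i * f (p₀.2 i) := by
    have h := hbound p₀
    rw [he0] at h
    have := abs_nonpos_iff.mp h
    linarith [sub_eq_zero.mp this]
  have l1 : Filter.Tendsto
      (fun p : DeltaOmega I × (I → Y) =>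
        (∑ i ∈ S, p.1.1 i * f (p.2 i)) - ‖f‖ * (1 - ∑ i ∈ S, p.1.1 i))
      (nhds p₀) (nhds (Phi p₀ f)) := by
    have := (hc.sub he).tendsto p₀
    rw [heq0]
    simpa [he0, Pi.sub_def] using this
  have l2 : Filter.Tendsto
      (fun p : DeltaOmega I × (I → Y) =>
        (∑ i ∈ S, p.1.1 i * f (p.2 i)) + ‖f‖ * (1 - ∑ i ∈ S, p.1.1 i))
      (nhds p₀) (nhds (Phi p₀ f)) := by
    have := (hc.add he).tendsto p₀
    rw [heq0]
    simpa [he0, Pi.add_def] using this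
  refine tendsto_of_tendsto_of_tendsto_of_le_of_le l1 l2 ?_ ?_
  · intro p
    have h := abs_le.mp (hbound p)
    dsimp only
    linarith [h.1]
  · intro p
    have h := abs_le.mp (hbound p)
    dsimp only
    linarith [h.2]

end Aux

/-- Lemma 7.1: for a compact Hausdorff space `Y`, the map sending `y` to the
class of any formal convex combination concentrated at `y` is well defined,
injective, and a topological embedding of `Y` into the quotient `Δ'(Y)`,
which is Hausdorff. -/
theorem compact_embeds_in_delta_quotient
    {I : Type*} [Infinite I] {Y : Type*} [TopologicalSpace Y]
    [CompactSpace Y] [T2Space Y]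
    (d₀ : DeltaOmega I) :
    (∀ (y : Y) (d : DeltaOmega I) (a : I → Y), (∀ i, d.1 i ≠ 0 → a i = y) →
      Quotient.mk (deltaSetoid I Y) (d, a) =
        Quotient.mk (deltaSetoid I Y) (d₀, fun _ => y)) ∧
    Function.Injective
      (fun y : Y => Quotient.mk (deltaSetoid I Y) (d₀, fun _ => y)) ∧
    Topology.IsEmbedding
      (fun y : Y => Quotient.mk (deltaSetoid I Y) (d₀, fun _ => y)) ∧
    T2Space (Quotient (deltaSetoid I Y)) := by
  classical
  have hconc : ∀ (y : Y) (d : DeltaOmega I) (a : I → Y), (∀ i, d.1 i ≠ 0 → a i = y) →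
      massAt (d, a) = fun y' => if y' = y then (1 : ℝ) else 0 := by
    intro y d a h
    funext y'
    by_cases hy : y' = y
    · subst hy
      have hfun : (fun i => Set.indicator {i | a i = y'} d.1 i) = d.1 := by
        funext i
        by_cases hd : d.1 i = 0
        · simp [Set.indicator_apply, hd]
        · simp [Set.indicator_apply, h i hd]
      show ∑' i, Set.indicator {i | a i = y'} d.1 i = _
      rw [tsum_congr (fun i => congrFun hfun i), d.2.2.2, if_pos rfl]
    · have hfun : ∀ i, Set.indicator {i | a i = y'} d.1 i = 0 := by
        intro i
        by_cases hd : d.1 i = 0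
        · simp [Set.indicator_apply, hd]
        · have : a i ≠ y' := by rw [h i hd]; exact fun hh => hy hh.symm
          simp [Set.indicator_apply, this]
      show ∑' i, Set.indicator {i | a i = y'} d.1 i = _
      rw [tsum_congr hfun, tsum_zero, if_neg hy]
  have part1 : ∀ (y : Y) (d : DeltaOmega I) (a : I → Y), (∀ i, d.1 i ≠ 0 → a i = y) →
      Quotient.mk (deltaSetoid I Y) (d, a) =
        Quotient.mk (deltaSetoid I Y) (d₀, fun _ => y) := by
    intro y d a h
    refine Quotient.sound ?_
    show massAt (d, a) = massAt (d₀, fun _ => y)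
    rw [hconc y d a h, hconc y d₀ (fun _ => y) (fun _ _ => rfl)]
  have part2 : Function.Injective
      (fun y : Y => Quotient.mk (deltaSetoid I Y) (d₀, fun _ => y)) := by
    intro y₁ y₂ h
    have h2 : massAt (d₀, fun _ => y₁) = massAt (d₀, fun _ => y₂) := Quotient.exact h
    rw [hconc y₁ d₀ _ (fun _ _ => rfl), hconc y₂ d₀ _ (fun _ _ => rfl)] at h2
    have h3 := congrFun h2 y₁
    by_contra hne
    simp [hne] at h3
  have hwell : ∀ p q : DeltaOmega I × (I → Y), (deltaSetoid I Y).r p q → Phi p = Phi q :=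
    fun _ _ h => Phi_well h
  have hFc : Continuous (Quotient.lift (fun p => Phi p) hwell :
      Quotient (deltaSetoid I Y) → C(Y, ℝ) → ℝ) :=
    Phi_cont.quotient_lift hwell
  have hFi : Function.Injective (Quotient.lift (fun p => Phi p) hwell :
      Quotient (deltaSetoid I Y) → C(Y, ℝ) → ℝ) := by
    intro a b hab
    obtain ⟨p, rfl⟩ := Quotient.exists_rep a
    obtain ⟨q, rfl⟩ := Quotient.exists_rep b
    refine Quotient.sound ?_
    show massAt p = massAt q
    by_contra hne
    exact Phi_sep hne hab
  haveI ht2 : T2Space (Quotient (deltaSetoid I Y)) :=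
    T2Space.of_injective_continuous hFi hFc
  have hcont : Continuous (fun y : Y => Quotient.mk (deltaSetoid I Y) (d₀, fun _ => y)) := by
    refine Continuous.comp ?_ (continuous_const.prodMk (continuous_pi fun _ => continuous_id))
    exact continuous_quotient_mk'
  exact ⟨part1, part2, (hcont.isClosedEmbedding part2).toIsEmbedding, ht2⟩
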